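/- For t in the interval D = (inf_α l_IV(α), l_IV(α̂_OLS)], let α̂_Pr(t) denote the unique solution of: minimize l_OLS(α) subject to l_IV(α) ≤ t, and for each such t let λ̃(t) ≥ 0 be the corresponding Lagrange dual optimum. If the constraint is active at every solution (l_IV(α̂_Pr(t)) = t for all t ∈ D), then the map t ↦ λ̃(t) is strictly decreasing on D. -/

import Mathlib

open Matrix

lemma quad_half {n : ℕ} (u v : Fin n → ℝ) :
    ((1/2 : ℝ) • (u + v)) ⬝ᵥ ((1/2 : ℝ) • (u + v)) =
      (u ⬝ᵥ u + v ⬝ᵥ v) / 2 - (1/4) * ((u - v) ⬝ᵥ (u - v)) := by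
  simp only [smul_dotProduct, dotProduct_smul, add_dotProduct, dotProduct_add,
    sub_dotProduct, dotProduct_sub, dotProduct_comm v u, smul_eq_mul]
  ring

lemma dot_self_nonneg {n : ℕ} (u : Fin n → ℝ) : 0 ≤ u ⬝ᵥ u :=
  Finset.sum_nonneg fun i _ => mul_self_nonneg (u i)

/-- The dual parameter as a function of the primal constraint bound is strictly
decreasing on `D = (inf l_IV, l_IV(α̂_OLS)]`, provided the constraint is active
at every primal solution. -/
theorem dual_parameter_strictAnti {n k : ℕ} (Z : Matrix (Fin n) (Fin k) ℝ)
    (Y : Fin n → ℝ) (PA : Matrix (Fin n) (Fin n) ℝ)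
    (hPsymm : PAᵀ = PA) (hPidem : PA * PA = PA)
    (hZ : (Zᵀ * Z).PosDef)
    (lOLS lIV : (Fin k → ℝ) → ℝ)
    (hOLS : ∀ α, lOLS α = (Y - Z.mulVec α) ⬝ᵥ (Y - Z.mulVec α))
    (hIV : ∀ α, lIV α = (PA.mulVec (Y - Z.mulVec α)) ⬝ᵥ (PA.mulVec (Y - Z.mulVec α)))
    (αOLS : Fin k → ℝ) (hOLSmin : ∀ α, lOLS αOLS ≤ lOLS α)
    (D : Set ℝ) (hD : D = Set.Ioc (sInf (Set.range lIV)) (lIV αOLS))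
    (αPr : ℝ → (Fin k → ℝ)) (lamt : ℝ → ℝ)
    (hfeas : ∀ t ∈ D, lIV (αPr t) ≤ t)
    (hPrmin : ∀ t ∈ D, ∀ α, lIV α ≤ t → lOLS (αPr t) ≤ lOLS α)
    (hlampos : ∀ t ∈ D, 0 ≤ lamt t)
    (hlag : ∀ t ∈ D, ∀ α,
      lOLS (αPr t) + lamt t * lIV (αPr t) ≤ lOLS α + lamt t * lIV α)
    (hactive : ∀ t ∈ D, lIV (αPr t) = t) :
    ∀ t1 ∈ D, ∀ t2 ∈ D, t1 < t2 → lamt t2 < lamt t1 := by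
  intro t1 ht1 t2 ht2 hlt
  set α1 := αPr t1 with hα1
  set α2 := αPr t2 with hα2
  have h12 := hlag t1 ht1 α2
  have h21 := hlag t2 ht2 α1
  rw [hactive t1 ht1, hactive t2 ht2] at h12 h21
  -- weak monotonicity
  have hweak : lamt t2 ≤ lamt t1 := by nlinarith
  rcases lt_or_eq_of_le hweak with h | heq
  · exact h
  -- equality case: derive a contradiction
  exfalso
  have hlam1 : lamt t1 = lamt t2 := heq.symm
  -- Lagrangian values are equal
  have hval : lOLS α1 + lamt t1 * t1 = lOLS α2 + lamt t1 * t2 := by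
    rw [hlam1] at h12 ⊢
    linarith
  -- midpoint
  set γ : Fin k → ℝ := (1/2 : ℝ) • (α1 + α2) with hγ
  set u := Y - Z.mulVec α1 with hu
  set v := Y - Z.mulVec α2 with hv
  have hmid : Y - Z.mulVec γ = (1/2 : ℝ) • (u + v) := by
    rw [hγ, hu, hv]
    rw [Matrix.mulVec_smul, Matrix.mulVec_add]
    ext i
    simp [Pi.smul_apply, Pi.add_apply, Pi.sub_apply]
    ring
  have hd : u - v = Z.mulVec (α2 - α1) := by
    rw [hu, hv, Matrix.mulVec_sub]
    ext i; simp
  set d := α2 - α1 with hdd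
  have hdne : d ≠ 0 := by
    intro h0
    have hαeq : α2 = α1 := sub_eq_zero.mp h0
    have : lIV α2 = lIV α1 := by rw [hαeq]
    rw [hactive t1 ht1, hactive t2 ht2] at this
    linarith
  -- positivity of ‖Z d‖²
  have hZd : 0 < Z.mulVec d ⬝ᵥ Z.mulVec d := by
    have h := hZ.dotProduct_mulVec_pos hdne
    rw [star_trivial] at h
    calc (0:ℝ) < d ⬝ᵥ ((Zᵀ * Z) *ᵥ d) := h
      _ = Z.mulVec d ⬝ᵥ Z.mulVec d := by
          rw [← Matrix.mulVec_mulVec, dotProduct_mulVec, Matrix.vecMul_transpose]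
  -- lOLS at midpoint
  have hOLSγ : lOLS γ = (lOLS α1 + lOLS α2) / 2 - (1/4) * (Z.mulVec d ⬝ᵥ Z.mulVec d) := by
    rw [hOLS γ, hOLS α1, hOLS α2, hmid, ← hu, ← hv, quad_half, hd]
  -- lIV at midpoint
  have hIVγ : lIV γ = (lIV α1 + lIV α2) / 2
      - (1/4) * (PA.mulVec (Z.mulVec d) ⬝ᵥ PA.mulVec (Z.mulVec d)) := by
    rw [hIV γ, hIV α1, hIV α2, hmid, ← hu, ← hv]
    have : PA.mulVec ((1/2 : ℝ) • (u + v)) = (1/2 : ℝ) • (PA.mulVec u + PA.mulVec v) := by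
      rw [Matrix.mulVec_smul, Matrix.mulVec_add]
    rw [this, quad_half]
    have : PA.mulVec u - PA.mulVec v = PA.mulVec (Z.mulVec d) := by
      rw [← Matrix.mulVec_sub, hd]
    rw [this]
  -- apply Lagrangian optimality at t1 to γ
  have hlagγ := hlag t1 ht1 γ
  rw [hactive t1 ht1] at hlagγ
  have hIV1 : lIV α1 = t1 := hactive t1 ht1
  have hIV2 : lIV α2 = t2 := hactive t2 ht2
  have hPAnn : 0 ≤ PA.mulVec (Z.mulVec d) ⬝ᵥ PA.mulVec (Z.mulVec d) :=
    dot_self_nonneg _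
  have hlp := hlampos t1 ht1
  nlinarith [hlagγ, hOLSγ, hIVγ, hval, hZd, hPAnn, hlp,
    mul_nonneg hlp hPAnn]
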